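/- Let L be an even hyperbolic lattice with positive cone P_L, and let V ⊆ {v ∈ L∨ : v² < 0} satisfy condition [V1]. Then the family of hyperplanes V* = {(v)⊥ : v ∈ V} is locally finite in P_L: for every compact subset J ⊆ P_L, the set of hyperplanes {(v)⊥ : v ∈ V, (v)⊥ ∩ J ≠ ∅} is finite. -/

import Mathlib

namespace K3Aut

variable {n : ℕ}

/-- The real symmetric bilinear pairing on `L ⊗ ℝ = ℝⁿ` determined by an
integral Gram matrix `B`. -/
def pair (B : Matrix (Fin n) (Fin n) ℤ) (x y : Fin n → ℝ) : ℝ :=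
  ∑ i, ∑ j, x i * (B i j : ℝ) * y j

/-- `x` is a point of the lattice `L` (integer coordinates). -/
def isLat (x : Fin n → ℝ) : Prop := ∀ i, ∃ k : ℤ, x i = (k : ℝ)

/-- `x` has rational coordinates (a point of `L ⊗ ℚ`). -/
def isRatPt (x : Fin n → ℝ) : Prop := ∀ i, ∃ q : ℚ, x i = (q : ℝ)

/-- `x` is a point of the dual lattice `L∨ ⊆ L ⊗ ℚ`. -/
def isDual (B : Matrix (Fin n) (Fin n) ℤ) (x : Fin n → ℝ) : Prop :=
  isRatPt x ∧ ∀ y : Fin n → ℝ, isLat y → ∃ k : ℤ, pair B x y = (k : ℝ)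

/-- The Gram matrix `B` is symmetric, nondegenerate and even. -/
def IsEvenLat (B : Matrix (Fin n) (Fin n) ℤ) : Prop :=
  B.IsSymm ∧ B.det ≠ 0 ∧ ∀ i, Even (B i i)

/-- The form restricted to the subspace `W` is nondegenerate with exactly one
positive direction, i.e. of signature `(1, dim W - 1)`. -/
def IsHypOn (B : Matrix (Fin n) (Fin n) ℤ) (W : Submodule ℝ (Fin n → ℝ)) : Prop :=
  (∃ x ∈ W, 0 < pair B x x) ∧
  (∀ x ∈ W, ∀ y ∈ W, 0 < pair B x x → 0 < pair B y y →
      pair B x x * pair B y y ≤ pair B x y ^ 2) ∧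
  (∀ x ∈ W, (∀ y ∈ W, pair B x y = 0) → x = 0)

/-- The lattice is hyperbolic: rank `n > 1` and signature `(1, n-1)`. -/
def IsHyperbolic (B : Matrix (Fin n) (Fin n) ℤ) : Prop :=
  1 < n ∧ IsHypOn B ⊤

/-- `P` is a positive cone: a connected component of the set of positive-norm
vectors of `L ⊗ ℝ`. -/
def IsPosCone (B : Matrix (Fin n) (Fin n) ℤ) (P : Set (Fin n → ℝ)) : Prop :=
  ∃ x, 0 < pair B x x ∧ P = connectedComponentIn {y | 0 < pair B y y} x

/-- The hyperplane `(v)⊥` of `P`. -/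
def perp (B : Matrix (Fin n) (Fin n) ℤ) (P : Set (Fin n → ℝ)) (v : Fin n → ℝ) :
    Set (Fin n → ℝ) := {x ∈ P | pair B x v = 0}

/-- `V ⊆ {v ∈ L∨ : v² < 0}`. -/
def DualNeg (B : Matrix (Fin n) (Fin n) ℤ) (V : Set (Fin n → ℝ)) : Prop :=
  ∀ v ∈ V, isDual B v ∧ pair B v v < 0

/-- Condition [V1]: the norms of the vectors of `V` are bounded. -/
def CondV1 (B : Matrix (Fin n) (Fin n) ℤ) (V : Set (Fin n → ℝ)) : Prop :=
  ∃ c : ℝ, 0 < c ∧ ∀ v ∈ V, -pair B v v < c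

/-- The cone `Σ_L(Δ)`. -/
def SigmaCone (B : Matrix (Fin n) (Fin n) ℤ) (Δ : Set (Fin n → ℝ)) :
    Set (Fin n → ℝ) :=
  {x | ∀ v ∈ Δ, 0 ≤ pair B x v}

/-- `D` is a `V*`-chamber: the closure in `P` of a connected component of the
complement in `P` of the hyperplanes `(v)⊥`, `v ∈ V`. -/
def IsChamber (B : Matrix (Fin n) (Fin n) ℤ) (P V D : Set (Fin n → ℝ)) : Prop :=
  ∃ x ∈ P, (∀ v ∈ V, pair B x v ≠ 0) ∧
    D = closure (connectedComponentIn {y ∈ P | ∀ v ∈ V, pair B y v ≠ 0} x) ∩ P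

/-- `Δ` is a defining set of the chamber `D`. -/
def IsDefSet (B : Matrix (Fin n) (Fin n) ℤ) (P Δ D : Set (Fin n → ℝ)) : Prop :=
  (∀ v ∈ Δ, isDual B v ∧ pair B v v < 0) ∧ D = SigmaCone B Δ ∩ P

/-- Condition [V3]: every `V*`-chamber has a finite defining set. -/
def CondV3 (B : Matrix (Fin n) (Fin n) ℤ) (P V : Set (Fin n → ℝ)) : Prop :=
  ∀ D, IsChamber B P V D → ∃ Δ : Set (Fin n → ℝ), Δ.Finite ∧ IsDefSet B P Δ D

/-- Condition [V4]: every boundary point of a `V*`-chamber is rational, i.e.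
every nonzero norm-zero vector of the closure of a chamber is a positive real
multiple of a rational vector. -/
def CondV4 (B : Matrix (Fin n) (Fin n) ℤ) (P V : Set (Fin n → ℝ)) : Prop :=
  ∀ D, IsChamber B P V D → ∀ x ∈ closure D, x ≠ 0 → pair B x x = 0 →
    ∃ t : ℝ, 0 < t ∧ ∃ y, isRatPt y ∧ x = t • y

/-- The action of `GL_n(ℤ)` on `L ⊗ ℝ`. -/
def act (g : (Matrix (Fin n) (Fin n) ℤ)ˣ) (x : Fin n → ℝ) : Fin n → ℝ :=
  ((g : Matrix (Fin n) (Fin n) ℤ).map ((↑) : ℤ → ℝ)).mulVec x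

/-- `g` is an isometry of `L` preserving the positive cone `P`,
i.e. an element of `O⁺(L)`. -/
def InOPlus (B : Matrix (Fin n) (Fin n) ℤ) (P : Set (Fin n → ℝ))
    (g : (Matrix (Fin n) (Fin n) ℤ)ˣ) : Prop :=
  (g : Matrix (Fin n) (Fin n) ℤ).transpose * B * (g : Matrix (Fin n) (Fin n) ℤ) = B ∧
    act g '' P = P

/-- Condition [V2]: `V` is invariant under the action of `G`. -/
def CondV2 (G : Subgroup ((Matrix (Fin n) (Fin n) ℤ)ˣ)) (V : Set (Fin n → ℝ)) : Prop :=
  ∀ g ∈ G, ∀ v ∈ V, act g v ∈ V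

/-- `(v)⊥` is a wall of the chamber `D`: it is disjoint from the interior of `D`
and `(v)⊥ ∩ D` contains a nonempty open subset of `(v)⊥`. -/
def IsWall (B : Matrix (Fin n) (Fin n) ℤ) (P : Set (Fin n → ℝ)) (v : Fin n → ℝ)
    (D : Set (Fin n → ℝ)) : Prop :=
  pair B v v < 0 ∧ perp B P v ∩ interior D = ∅ ∧
  ∃ W : Set (Fin n → ℝ), IsOpen W ∧ (W ∩ perp B P v).Nonempty ∧ W ∩ perp B P v ⊆ D

/-- `D'` is the chamber adjacent to `D` across the wall `(v)⊥`. -/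
def IsAdjacent (B : Matrix (Fin n) (Fin n) ℤ) (P V : Set (Fin n → ℝ))
    (D : Set (Fin n → ℝ)) (v : Fin n → ℝ) (D' : Set (Fin n → ℝ)) : Prop :=
  IsChamber B P V D' ∧ D' ≠ D ∧
  ∃ W : Set (Fin n → ℝ), IsOpen W ∧ (W ∩ perp B P v).Nonempty ∧
    W ∩ perp B P v ⊆ D ∩ D'

/-- `S` is (the set of real points of) a primitive sublattice of `L`. -/
def IsPrimSub (S : Submodule ℤ (Fin n → ℝ)) : Prop :=
  (∀ x ∈ S, isLat x) ∧
  ∀ x : Fin n → ℝ, isLat x → ∀ k : ℤ, k ≠ 0 → (k : ℝ) • x ∈ S → x ∈ S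

/-- `xS` is the orthogonal projection of `x` to `S ⊗ ℚ`. -/
def IsProjS (B : Matrix (Fin n) (Fin n) ℤ) (S : Submodule ℤ (Fin n → ℝ))
    (xS x : Fin n → ℝ) : Prop :=
  xS ∈ Submodule.span ℚ (S : Set (Fin n → ℝ)) ∧ ∀ s ∈ S, pair B (x - xS) s = 0

/-- The orthogonal complement `R = S⊥ ∩ L` of `S` in `L`. -/
def orthCompl (B : Matrix (Fin n) (Fin n) ℤ) (S : Submodule ℤ (Fin n → ℝ)) :
    Set (Fin n → ℝ) :=
  {x | isLat x ∧ ∀ s ∈ S, pair B x s = 0}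

/-- `P` is a positive cone of the subspace `W`. -/
def IsPosConeIn (B : Matrix (Fin n) (Fin n) ℤ) (W : Set (Fin n → ℝ))
    (P : Set (Fin n → ℝ)) : Prop :=
  ∃ x ∈ W, 0 < pair B x x ∧ P = connectedComponentIn {y ∈ W | 0 < pair B y y} x



section Helpers

lemma pair_add_left (B : Matrix (Fin n) (Fin n) ℤ) (x y z : Fin n → ℝ) :
    pair B (x + y) z = pair B x z + pair B y z := by
  simp [pair, add_mul, Finset.sum_add_distrib]

lemma pair_add_right (B : Matrix (Fin n) (Fin n) ℤ) (x y z : Fin n → ℝ) :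
    pair B x (y + z) = pair B x y + pair B x z := by
  simp [pair, mul_add, Finset.sum_add_distrib]

lemma pair_smul_left (B : Matrix (Fin n) (Fin n) ℤ) (a : ℝ) (x y : Fin n → ℝ) :
    pair B (a • x) y = a * pair B x y := by
  simp only [pair, Finset.mul_sum, Pi.smul_apply, smul_eq_mul]
  exact Finset.sum_congr rfl fun i _ => Finset.sum_congr rfl fun j _ => by ring

lemma pair_smul_right (B : Matrix (Fin n) (Fin n) ℤ) (a : ℝ) (x y : Fin n → ℝ) :
    pair B x (a • y) = a * pair B x y := by
  simp only [pair, Finset.mul_sum, Pi.smul_apply, smul_eq_mul]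
  exact Finset.sum_congr rfl fun i _ => Finset.sum_congr rfl fun j _ => by ring

lemma pair_symm {B : Matrix (Fin n) (Fin n) ℤ} (hs : B.IsSymm) (x y : Fin n → ℝ) :
    pair B x y = pair B y x := by
  rw [pair, Finset.sum_comm]
  exact Finset.sum_congr rfl fun j _ => Finset.sum_congr rfl fun i _ => by
    rw [hs.apply i j]; ring

lemma pair_cont (B : Matrix (Fin n) (Fin n) ℤ) :
    Continuous fun p : (Fin n → ℝ) × (Fin n → ℝ) => pair B p.1 p.2 := by
  unfold pair
  fun_prop

lemma pair_single (B : Matrix (Fin n) (Fin n) ℤ) (v : Fin n → ℝ) (j : Fin n) :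
    pair B v (Pi.single j 1) = ∑ i, v i * (B i j : ℝ) := by
  unfold pair
  refine Finset.sum_congr rfl fun i _ => ?_
  simp [Pi.single_apply, mul_ite]

lemma pair_expand {B : Matrix (Fin n) (Fin n) ℤ} (hs : B.IsSymm) (v z : Fin n → ℝ) (a : ℝ) :
    pair B (v + a • z) (v + a • z) =
      pair B v v + 2 * (a * pair B v z) + a ^ 2 * pair B z z := by
  rw [pair_add_left, pair_add_right, pair_add_right, pair_smul_left, pair_smul_right,
    pair_smul_right, pair_smul_left, pair_symm hs z v]
  ring

/-- If `x² > 0` and `⟨x,v⟩ = 0` then `v² ≤ 0`. -/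
lemma orth_nonpos {B : Matrix (Fin n) (Fin n) ℤ} (hhyp : IsHypOn B ⊤)
    {x v : Fin n → ℝ} (hx : 0 < pair B x x) (hxv : pair B x v = 0) :
    pair B v v ≤ 0 := by
  by_contra h
  push_neg at h
  have := hhyp.2.1 x trivial v trivial hx h
  rw [hxv] at this
  nlinarith

/-- If `x² > 0`, `⟨x,v⟩ = 0` and `v ≠ 0` then `v² < 0`. -/
lemma orth_neg {B : Matrix (Fin n) (Fin n) ℤ} (hs : B.IsSymm) (hhyp : IsHypOn B ⊤)
    {x v : Fin n → ℝ} (hx : 0 < pair B x x) (hxv : pair B x v = 0) (hv : v ≠ 0) :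
    pair B v v < 0 := by
  rcases lt_or_eq_of_le (orth_nonpos hhyp hx hxv) with h | h
  · exact h
  exfalso
  have hz₀ : ∃ z₀ : Fin n → ℝ, pair B v z₀ ≠ 0 := by
    by_contra hc
    push_neg at hc
    exact hv (hhyp.2.2 v trivial fun y _ => hc y)
  obtain ⟨z₀, hz₀⟩ := hz₀
  set z : Fin n → ℝ := z₀ + (-(pair B x z₀ / pair B x x)) • x with hzdef
  have hxz : pair B x z = 0 := by
    rw [hzdef, pair_add_right, pair_smul_right]
    field_simp
    ring
  have hvz : pair B v z = pair B v z₀ := by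
    rw [hzdef, pair_add_right, pair_smul_right, pair_symm hs v x, hxv]
    ring
  have hz2 : pair B z z ≤ 0 := orth_nonpos hhyp hx hxz
  set d : ℝ := pair B v z with hd
  have hdne : d ≠ 0 := by rw [hvz]; exact hz₀
  set t : ℝ := 1 / (1 - pair B z z) with ht
  have h1z : (0:ℝ) < 1 - pair B z z := by linarith
  have htpos : 0 < t := by positivity
  set u : Fin n → ℝ := v + (t * d) • z with hu
  have hxu : pair B x u = 0 := by
    rw [hu, pair_add_right, pair_smul_right, hxv, hxz]; ring
  have hu2 : pair B u u = t * d ^ 2 * (2 + t * pair B z z) := by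
    rw [hu, pair_expand hs, h, ← hd]; ring
  have htz : -1 < t * pair B z z := by
    rw [ht, div_mul_eq_mul_div, one_mul, lt_div_iff₀ h1z]
    linarith
  have hupos : 0 < pair B u u := by
    rw [hu2]
    have h2 : 0 < d ^ 2 := by positivity
    have h3 : 0 < 2 + t * pair B z z := by linarith
    positivity
  have := orth_nonpos hhyp hx hxu
  linarith

/-- A bounded set of vectors with integral pairings against `L` is finite. -/
lemma finite_of_bounded {B : Matrix (Fin n) (Fin n) ℤ} (hdet : B.det ≠ 0)
    {S : Set (Fin n → ℝ)} (R : ℝ)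
    (h : ∀ v ∈ S, (∀ j, ∃ k : ℤ, ∑ i, v i * (B i j : ℝ) = (k : ℝ)) ∧ ‖v‖ ≤ R) :
    S.Finite := by
  classical
  set A : Matrix (Fin n) (Fin n) ℝ := B.map ((↑) : ℤ → ℝ) with hA
  have hAdet : A.det ≠ 0 := by
    have h1 : ((B.det : ℤ) : ℝ) = A.det := RingHom.map_det (Int.castRingHom ℝ) B
    rw [← h1]
    exact Int.cast_ne_zero.mpr hdet
  haveI : Invertible A := A.invertibleOfIsUnitDet (isUnit_iff_ne_zero.2 hAdet)
  have hginj : Function.Injective (fun v : Fin n → ℝ => Matrix.vecMul v A) :=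
    Matrix.vecMul_injective_of_invertible A
  set M : ℝ := ∑ i, ∑ j, |(B i j : ℝ)| with hM
  set K : ℤ := max ⌈R * M⌉ 0 with hK
  have hbnd : ∀ v ∈ S, ∀ j, |∑ i, v i * (B i j : ℝ)| ≤ R * M := by
    intro v hv j
    have hvR := (h v hv).2
    have hR0 : (0:ℝ) ≤ R := le_trans (norm_nonneg v) hvR
    calc |∑ i, v i * (B i j : ℝ)| ≤ ∑ i, |v i * (B i j : ℝ)| :=
          Finset.abs_sum_le_sum_abs _ _
      _ ≤ ∑ i, R * |(B i j : ℝ)| := by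
          refine Finset.sum_le_sum fun i _ => ?_
          rw [abs_mul]
          have h1 : |v i| ≤ ‖v‖ := by
            simpa [Real.norm_eq_abs] using norm_le_pi_norm v i
          have h2 : |v i| ≤ R := le_trans h1 hvR
          exact mul_le_mul_of_nonneg_right h2 (abs_nonneg _)
      _ = R * ∑ i, |(B i j : ℝ)| := by rw [Finset.mul_sum]
      _ ≤ R * M := by
          refine mul_le_mul_of_nonneg_left ?_ hR0
          rw [hM]
          refine Finset.sum_le_sum fun i _ => ?_
          exact Finset.single_le_sum (fun j' _ => abs_nonneg ((B i j' : ℝ)))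
            (Finset.mem_univ j)
  have himg : (fun v => Matrix.vecMul v A) '' S ⊆
      (fun z : Fin n → ℤ => (fun j => (z j : ℝ))) ''
        Set.Icc (fun _ => -K) (fun _ => K) := by
    rintro w ⟨v, hv, rfl⟩
    choose k hk using (h v hv).1
    have hvec : ∀ j, Matrix.vecMul v A j = (k j : ℝ) := by
      intro j
      rw [← hk j]
      simp [Matrix.vecMul, dotProduct, Matrix.map_apply, hA]
    refine ⟨k, ?_, by funext j; exact (hvec j).symm⟩
    rw [Set.mem_Icc]
    have habs : ∀ j, |(k j : ℝ)| ≤ R * M := by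
      intro j; rw [← hk j]; exact hbnd v hv j
    constructor
    · intro j
      have h1 : -(R * M) ≤ (k j : ℝ) := neg_le_of_abs_le (habs j)
      have h2 : R * M ≤ (⌈R * M⌉ : ℝ) := Int.le_ceil _
      have h3 : ((-K : ℤ) : ℝ) ≤ (k j : ℝ) := by
        have : ((K : ℤ) : ℝ) = ((max ⌈R * M⌉ 0 : ℤ) : ℝ) := by rw [hK]
        push_cast [hK]
        have h4 : R * M ≤ max (⌈R * M⌉ : ℝ) 0 := le_trans h2 (le_max_left _ _)
        linarith
      exact_mod_cast h3
    · intro j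
      have h1 : (k j : ℝ) ≤ R * M := le_of_abs_le (habs j)
      have h2 : R * M ≤ (⌈R * M⌉ : ℝ) := Int.le_ceil _
      have h3 : (k j : ℝ) ≤ ((K : ℤ) : ℝ) := by
        push_cast [hK]
        have h4 : R * M ≤ max (⌈R * M⌉ : ℝ) 0 := le_trans h2 (le_max_left _ _)
        linarith
      exact_mod_cast h3
  exact Set.Finite.of_finite_image
    (((Set.finite_Icc _ _).image _).subset himg) hginj.injOn

end Helpers

/-- Let `L` be an even hyperbolic lattice with positive cone
`P`, and let `V ⊆ {v ∈ L∨ : v² < 0}` satisfy condition [V1].  Then the family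
of hyperplanes `V* = {(v)⊥ : v ∈ V}` is locally finite in `P`: only finitely
many of these hyperplanes meet any given compact subset of `P`. -/
theorem statement_2 {n : ℕ} (B : Matrix (Fin n) (Fin n) ℤ)
    (hB : IsEvenLat B) (hhyp : IsHyperbolic B)
    (P : Set (Fin n → ℝ)) (hP : IsPosCone B P)
    (V : Set (Fin n → ℝ)) (hV : DualNeg B V) (hV1 : CondV1 B V) :
    ∀ J : Set (Fin n → ℝ), IsCompact J → J ⊆ P →
      {H : Set (Fin n → ℝ) | ∃ v ∈ V, H = perp B P v ∧ (H ∩ J).Nonempty}.Finite := by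
  classical
  obtain ⟨hsym, hdet, -⟩ := hB
  obtain ⟨-, hhypon⟩ := hhyp
  obtain ⟨c, hc, hVbd⟩ := hV1
  intro J hJ hJP
  have hPpos : ∀ x ∈ P, 0 < pair B x x := by
    obtain ⟨x₀, hx₀, rfl⟩ := hP
    intro x hx
    have h1 : x ∈ {y | 0 < pair B y y} :=
      connectedComponentIn_subset {y | 0 < pair B y y} x₀ hx
    exact h1
  -- uniform lower bound on `-u²` for unit vectors orthogonal to points of `J`
  obtain ⟨m, hm, hkey⟩ : ∃ m : ℝ, 0 < m ∧ ∀ x ∈ J, ∀ u : Fin n → ℝ,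
      ‖u‖ = 1 → pair B x u = 0 → m ≤ -pair B u u := by
    set C : Set ((Fin n → ℝ) × (Fin n → ℝ)) :=
      (J ×ˢ Metric.sphere 0 1) ∩ ((fun p => pair B p.1 p.2) ⁻¹' {0}) with hC
    have hCc : IsCompact C :=
      (hJ.prod (isCompact_sphere 0 1)).inter_right
        (isClosed_singleton.preimage (pair_cont B))
    have hmem : ∀ x ∈ J, ∀ u : Fin n → ℝ, ‖u‖ = 1 → pair B x u = 0 → (x, u) ∈ C := by
      intro x hx u hu hxu
      exact ⟨⟨hx, by simpa [mem_sphere_zero_iff_norm] using hu⟩, by simpa using hxu⟩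
    rcases C.eq_empty_or_nonempty with hE | hNE
    · refine ⟨1, one_pos, fun x hx u hu hxu => ?_⟩
      exact absurd (hmem x hx u hu hxu) (by simp [hE])
    · have hfc : Continuous fun p : (Fin n → ℝ) × (Fin n → ℝ) => -pair B p.2 p.2 :=
        ((pair_cont B).comp (continuous_snd.prodMk continuous_snd)).neg
      obtain ⟨p, hpC, hmin⟩ := hCc.exists_isMinOn hNE hfc.continuousOn
      refine ⟨-pair B p.2 p.2, ?_, fun x hx u hu hxu => hmin (hmem x hx u hu hxu)⟩
      obtain ⟨⟨hp1, hp2⟩, hp3⟩ := hpC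
      have hx2 : 0 < pair B p.1 p.1 := hPpos _ (hJP hp1)
      have hp2' : ‖p.2‖ = 1 := by simpa [mem_sphere_zero_iff_norm] using hp2
      have hne : p.2 ≠ 0 := by
        intro h0
        rw [h0] at hp2'
        simp at hp2'
      have := orth_neg hsym hhypon hx2 (by simpa using hp3) hne
      linarith
  -- the set of relevant `v`
  set Vc : Set (Fin n → ℝ) := {v | v ∈ V ∧ (perp B P v ∩ J).Nonempty} with hVcdef
  have hVcfin : Vc.Finite := by
    refine finite_of_bounded hdet (Real.sqrt (c / m)) fun v hv => ?_
    obtain ⟨hvV, x, hxperp, hxJ⟩ := hv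
    obtain ⟨hxP, hxv⟩ := hxperp
    obtain ⟨hvdual, hvneg⟩ := hV v hvV
    constructor
    · intro j
      obtain ⟨k, hk⟩ := hvdual.2 (Pi.single j 1) (fun i => by
        refine ⟨if i = j then 1 else 0, ?_⟩
        by_cases hij : i = j <;> simp [Pi.single_apply, hij])
      exact ⟨k, by rw [← pair_single B v j]; exact hk⟩
    · -- norm bound
      have hvne : v ≠ 0 := by
        intro h0
        rw [h0] at hvneg
        simp [pair] at hvneg
      have hnv : (0:ℝ) < ‖v‖ := norm_pos_iff.2 hvne
      set u : Fin n → ℝ := ‖v‖⁻¹ • v with hu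
      have hun : ‖u‖ = 1 := by
        rw [hu, norm_smul, norm_inv, norm_norm]
        exact inv_mul_cancel₀ (ne_of_gt hnv)
      have hxu : pair B x u = 0 := by
        rw [hu, pair_smul_right, hxv]; ring
      have h1 : m ≤ -pair B u u := hkey x hxJ u hun hxu
      have h2 : pair B u u = ‖v‖⁻¹ ^ 2 * pair B v v := by
        rw [hu, pair_smul_left, pair_smul_right]; ring
      have h3 : m * ‖v‖ ^ 2 ≤ -pair B v v := by
        rw [h2] at h1
        have h4 : (‖v‖⁻¹) ^ 2 * ‖v‖ ^ 2 = 1 := by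
          field_simp
        nlinarith [sq_nonneg ‖v‖]
      have h5 : -pair B v v < c := hVbd v hvV
      have h6 : ‖v‖ ^ 2 ≤ c / m := by
        rw [le_div_iff₀ hm]
        nlinarith
      calc ‖v‖ = Real.sqrt (‖v‖ ^ 2) := (Real.sqrt_sq (norm_nonneg v)).symm
        _ ≤ Real.sqrt (c / m) := Real.sqrt_le_sqrt h6
  have hsub : {H : Set (Fin n → ℝ) | ∃ v ∈ V, H = perp B P v ∧ (H ∩ J).Nonempty}
      ⊆ (perp B P) '' Vc := by
    rintro H ⟨v, hv, rfl, hne⟩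
    exact ⟨v, ⟨hv, hne⟩, rfl⟩
  exact (hVcfin.image _).subset hsub


end K3Aut
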